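/- Let φ, α, κ, γ̃_ij, A_ij, Γ_i be smooth fields on ℝ × ℝ³ satisfying the linearized BSSN evolution equations (E3) and (E5). Then at every point of ℝ × ℝ³ and for each i, the time derivative of the momentum constraint quantity M_i := ∂_l A_il − (2/3)∂_i κ is given by ∂_t M_i = −(1/2)Δ(∂_m γ̃_im) + (1/2)∂_i(∂_l Γ_l) + (1/2)ΔΓ_i − 4∂_i Δφ. -/

import Mathlib

noncomputable section

/-- Spacetime ℝ × ℝ³. -/
abbrev Spc : Type := ℝ × (Fin 3 → ℝ)

/-- Time derivative ∂_t. -/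
noncomputable def pt (f : Spc → ℝ) : Spc → ℝ :=
  fun p => deriv (fun s => f (s, p.2)) p.1

/-- Spatial partial derivative ∂_i. -/
noncomputable def ps (i : Fin 3) (f : Spc → ℝ) : Spc → ℝ :=
  fun p => deriv (fun s => f (p.1, Function.update p.2 i s)) (p.2 i)

/-- Spatial Laplacian Δ = Σ_i ∂_i ∂_i. -/
noncomputable def lap (f : Spc → ℝ) : Spc → ℝ :=
  fun p => ∑ i : Fin 3, ps i (ps i f) p

/-- Kronecker delta δ_ij. -/
noncomputable def kron (i j : Fin 3) : ℝ := if i = j then 1 else 0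

/-! ### Auxiliary infrastructure: directional derivatives -/

/-- Directional derivative along `v`. -/
noncomputable def dd (v : ℝ × (Fin 3 → ℝ)) (f : Spc → ℝ) : Spc → ℝ :=
  fun p => fderiv ℝ f p v

def ee (i : Fin 3) : ℝ × (Fin 3 → ℝ) := (0, Pi.single i 1)
def et : ℝ × (Fin 3 → ℝ) := ((1:ℝ), 0)

lemma cd_diff {f : Spc → ℝ} (hf : ContDiff ℝ (⊤:ℕ∞) f) : Differentiable ℝ f :=
  hf.differentiable (by simp)

lemma dd_contDiff {f : Spc → ℝ} (hf : ContDiff ℝ (⊤:ℕ∞) f) (v : ℝ × (Fin 3 → ℝ)) :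
    ContDiff ℝ (⊤:ℕ∞) (dd v f) :=
  (hf.fderiv_right (by exact_mod_cast le_top)).clm_apply contDiff_const

lemma hasDerivAt_curve (i : Fin 3) (p : Spc) (s : ℝ) :
    HasDerivAt (fun s => ((p.1, Function.update p.2 i s) : Spc)) (ee i) s := by
  apply HasDerivAt.prodMk (hasDerivAt_const _ _)
  rw [hasDerivAt_pi]
  intro j
  rcases eq_or_ne j i with h | h
  · subst h
    simp only [Function.update_self, Pi.single_eq_same]
    exact hasDerivAt_id s
  · simp only [Function.update_of_ne h, Pi.single_eq_of_ne h]
    exact hasDerivAt_const _ _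

lemma hasDerivAt_ps {f : Spc → ℝ} (hf : ContDiff ℝ (⊤:ℕ∞) f) (i : Fin 3) (p : Spc) :
    HasDerivAt (fun s => f (p.1, Function.update p.2 i s)) (dd (ee i) f p) (p.2 i) := by
  have h1 := hasDerivAt_curve i p (p.2 i)
  have h2 : HasFDerivAt f (fderiv ℝ f p) ((p.1, Function.update p.2 i (p.2 i)) : Spc) := by
    rw [Function.update_eq_self]
    exact (cd_diff hf p).hasFDerivAt
  exact h2.comp_hasDerivAt _ h1

lemma hasDerivAt_pt {f : Spc → ℝ} (hf : ContDiff ℝ (⊤:ℕ∞) f) (p : Spc) :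
    HasDerivAt (fun s => f (s, p.2)) (dd et f p) p.1 := by
  have h1 : HasDerivAt (fun s : ℝ => ((s, p.2) : Spc)) et p.1 :=
    (hasDerivAt_id p.1).prodMk (hasDerivAt_const _ _)
  have h2 : HasFDerivAt f (fderiv ℝ f p) ((p.1, p.2) : Spc) := (cd_diff hf p).hasFDerivAt
  exact h2.comp_hasDerivAt _ h1

lemma ps_eq {f : Spc → ℝ} (hf : ContDiff ℝ (⊤:ℕ∞) f) (i : Fin 3) :
    ps i f = dd (ee i) f := by
  funext p; exact (hasDerivAt_ps hf i p).deriv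

lemma pt_eq {f : Spc → ℝ} (hf : ContDiff ℝ (⊤:ℕ∞) f) :
    pt f = dd et f := by
  funext p; exact (hasDerivAt_pt hf p).deriv

lemma lap_eq {f : Spc → ℝ} (hf : ContDiff ℝ (⊤:ℕ∞) f) :
    lap f = fun p => ∑ j : Fin 3, dd (ee j) (dd (ee j) f) p := by
  funext p
  simp only [lap]
  refine Finset.sum_congr rfl fun j _ => ?_
  rw [ps_eq hf j, ps_eq (dd_contDiff hf _) j]

lemma lap_contDiff {f : Spc → ℝ} (hf : ContDiff ℝ (⊤:ℕ∞) f) :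
    ContDiff ℝ (⊤:ℕ∞) (lap f) := by
  rw [lap_eq hf]
  exact ContDiff.sum fun j _ => dd_contDiff (dd_contDiff hf _) _

lemma dd_dd_eq {f : Spc → ℝ} (hf : ContDiff ℝ (⊤:ℕ∞) f) (v w : ℝ × (Fin 3 → ℝ)) (p : Spc) :
    dd v (dd w f) p = fderiv ℝ (fderiv ℝ f) p v w := by
  have hdf : DifferentiableAt ℝ (fderiv ℝ f) p :=
    ((hf.fderiv_right (m := (⊤:ℕ∞)) (by exact_mod_cast le_top)).differentiable
      (by simp)) p
  have h := ((ContinuousLinearMap.apply ℝ ℝ w).hasFDerivAt).comp p hdf.hasFDerivAt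
  have hfun : dd w f = ⇑((ContinuousLinearMap.apply ℝ ℝ) w) ∘ fderiv ℝ f := rfl
  show fderiv ℝ (dd w f) p v = _
  rw [hfun, h.fderiv]
  rfl

lemma dd_comm {f : Spc → ℝ} (hf : ContDiff ℝ (⊤:ℕ∞) f) (v w : ℝ × (Fin 3 → ℝ)) (p : Spc) :
    dd v (dd w f) p = dd w (dd v f) p := by
  rw [dd_dd_eq hf, dd_dd_eq hf]
  exact (hf.contDiffAt.isSymmSndFDerivAt (by rw [minSmoothness_of_isRCLikeNormedField]; show ((2:ℕ∞) : WithTop ℕ∞) ≤ _; exact WithTop.coe_le_coe.mpr le_top)) v w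

lemma dd_comm_fun {f : Spc → ℝ} (hf : ContDiff ℝ (⊤:ℕ∞) f) (v w : ℝ × (Fin 3 → ℝ)) :
    dd v (dd w f) = dd w (dd v f) := funext fun p => dd_comm hf v w p

lemma dd_sum {F : Fin 3 → Spc → ℝ} (hF : ∀ m, ContDiff ℝ (⊤:ℕ∞) (F m))
    (v : ℝ × (Fin 3 → ℝ)) :
    dd v (fun q => ∑ m : Fin 3, F m q) = fun p => ∑ m : Fin 3, dd v (F m) p := by
  funext p
  show fderiv ℝ (fun q => ∑ m : Fin 3, F m q) p v = _
  rw [fderiv_fun_sum (fun m _ => (cd_diff (hF m)) p)]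
  simp [dd]

lemma dd_neg {g : Spc → ℝ} (v : ℝ × (Fin 3 → ℝ)) :
    dd v (fun q => -(g q)) = fun p => -(dd v g p) := by
  funext p
  show fderiv ℝ (fun q => -(g q)) p v = _
  rw [fderiv_fun_neg]
  rfl

lemma dd_sum_p {F : Fin 3 → Spc → ℝ} (hF : ∀ m, ContDiff ℝ (⊤:ℕ∞) (F m))
    (v : ℝ × (Fin 3 → ℝ)) (p : Spc) :
    dd v (fun q => ∑ m : Fin 3, F m q) p = ∑ m : Fin 3, dd v (F m) p :=
  congrFun (dd_sum hF v) p

lemma dd_neg_p {g : Spc → ℝ} (v : ℝ × (Fin 3 → ℝ)) (p : Spc) :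
    dd v (fun q => -(g q)) p = -(dd v g p) :=
  congrFun (dd_neg v) p

lemma dd_lap {g : Spc → ℝ} (hg : ContDiff ℝ (⊤:ℕ∞) g) (v : ℝ × (Fin 3 → ℝ)) (p : Spc) :
    dd v (lap g) p = ∑ m : Fin 3, dd v (dd (ee m) (dd (ee m) g)) p := by
  rw [lap_eq hg, dd_sum_p (fun m => dd_contDiff (dd_contDiff hg _) _) v p]

lemma ddM (v : ℝ × (Fin 3 → ℝ)) (p : Spc) (c : ℝ) {g h : Spc → ℝ}
    (hg : ContDiff ℝ (⊤:ℕ∞) g) (hh : ContDiff ℝ (⊤:ℕ∞) h) :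
    dd v (fun q => g q - c * h q) p = dd v g p - c * dd v h p := by
  have H := ((cd_diff hg p).hasFDerivAt).sub (((cd_diff hh p).hasFDerivAt).const_mul c)
  show fderiv ℝ (fun q => g q - c * h q) p v = _
  erw [H.fderiv]
  simp [dd, smul_eq_mul]

lemma ddR (v : ℝ × (Fin 3 → ℝ)) (p : Spc) (ca cb cc cd cf : ℝ)
    (a b1 b2 c d e f : Spc → ℝ)
    (ha : ContDiff ℝ (⊤:ℕ∞) a) (hb1 : ContDiff ℝ (⊤:ℕ∞) b1) (hb2 : ContDiff ℝ (⊤:ℕ∞) b2)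
    (hc : ContDiff ℝ (⊤:ℕ∞) c) (hd : ContDiff ℝ (⊤:ℕ∞) d)
    (he : ContDiff ℝ (⊤:ℕ∞) e) (hf : ContDiff ℝ (⊤:ℕ∞) f) :
    dd v (fun q => ca * a q + cb * (b1 q + b2 q) - cc * c q - cd * d q - e q + cf * f q) p
      = ca * dd v a p + cb * (dd v b1 p + dd v b2 p) - cc * dd v c p - cd * dd v d p
        - dd v e p + cf * dd v f p := by
  have Ha := (cd_diff ha p).hasFDerivAt
  have Hb1 := (cd_diff hb1 p).hasFDerivAt
  have Hb2 := (cd_diff hb2 p).hasFDerivAt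
  have Hc := (cd_diff hc p).hasFDerivAt
  have Hd := (cd_diff hd p).hasFDerivAt
  have He := (cd_diff he p).hasFDerivAt
  have Hf := (cd_diff hf p).hasFDerivAt
  have H := (((((Ha.const_mul ca).add ((Hb1.add Hb2).const_mul cb)).sub (Hc.const_mul cc)).sub
      (Hd.const_mul cd)).sub He).add (Hf.const_mul cf)
  show fderiv ℝ _ p v = _
  erw [H.fderiv]
  simp [dd, smul_eq_mul]
  ring

lemma kron_sum (i : Fin 3) (c : Fin 3 → ℝ) : ∑ l, kron i l * c l = c i := by
  simp [kron, ite_mul]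

lemma final_alg (i : Fin 3) (Cγ : Fin 3 → Fin 3 → ℝ) (G1 G2 Pφ cφ Pα cα : Fin 3 → ℝ)
    (hcφ : cφ i = ∑ l, Pφ l) (hcα : cα i = ∑ l, Pα l) :
    (∑ l, (-(1/2) * (∑ m, Cγ l m) + (1/2) * (G1 l + G2 l) - 2 * Pφ l
        - 2 * kron i l * cφ l - Pα l + (1/3) * kron i l * cα l))
      - 2/3 * (-(cα i)) =
    -(1/2) * (∑ j, ∑ m, Cγ m j) + (1/2) * (∑ l, G1 l) + (1/2) * (∑ l, G2 l)
      - 4 * cφ i := by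
  have h4 : ∀ l, 2 * kron i l * cφ l = 2 * (kron i l * cφ l) := fun l => by ring
  have h6 : ∀ l : Fin 3, (1/3) * kron i l * cα l = (1/3) * (kron i l * cα l) := fun l => by ring
  simp only [h4, h6, Finset.sum_add_distrib, Finset.sum_sub_distrib, ← Finset.mul_sum, kron_sum]
  rw [Finset.sum_comm, hcφ, hcα]
  ring

/-- If (E3) and (E5) hold, then the time derivative of the momentum constraint
quantity `M_i = ∂_l A_il − (2/3)∂_i κ` is
`∂_t M_i = −(1/2)Δ(∂_m γ̃_im) + (1/2)∂_i(∂_l Γ_l) + (1/2)ΔΓ_i − 4∂_i Δφ`. -/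
theorem momentum_constraint_time_derivative
    (φ α κ : Spc → ℝ) (Γ : Fin 3 → Spc → ℝ)
    (γ A : Fin 3 → Fin 3 → Spc → ℝ)
    (hφ : ContDiff ℝ (⊤ : ℕ∞) φ) (hα : ContDiff ℝ (⊤ : ℕ∞) α)
    (hκ : ContDiff ℝ (⊤ : ℕ∞) κ)
    (hΓ : ∀ i, ContDiff ℝ (⊤ : ℕ∞) (Γ i))
    (hγ : ∀ i j, ContDiff ℝ (⊤ : ℕ∞) (γ i j)) (hA : ∀ i j, ContDiff ℝ (⊤ : ℕ∞) (A i j))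
    (hγsym : ∀ i j, γ i j = γ j i) (hAsym : ∀ i j, A i j = A j i)
    (E3 : ∀ p, pt κ p = -(lap α p))
    (E5 : ∀ i j p, pt (A i j) p =
      -(1/2) * lap (γ i j) p + (1/2) * (ps i (Γ j) p + ps j (Γ i) p)
        - 2 * ps i (ps j φ) p - 2 * kron i j * lap φ p
        - ps i (ps j α) p + (1/3) * kron i j * lap α p)
    (M : Fin 3 → Spc → ℝ)
    (hM : ∀ i, M i = fun p => (∑ l, ps l (A i l) p) - (2/3) * ps i κ p) :
    ∀ i p, pt (M i) p =
      -(1/2) * lap (fun q => ∑ m, ps m (γ i m) q) p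
        + (1/2) * ps i (fun q => ∑ l, ps l (Γ l) q) p
        + (1/2) * lap (Γ i) p - 4 * ps i (lap φ) p := by
  intro i p
  have hAfun : ∀ l, dd et (A i l) = fun q =>
      -(1/2) * lap (γ i l) q + (1/2) * (dd (ee i) (Γ l) q + dd (ee l) (Γ i) q)
        - 2 * dd (ee i) (dd (ee l) φ) q - 2 * kron i l * lap φ q
        - dd (ee i) (dd (ee l) α) q + (1/3) * kron i l * lap α q := by
    intro l
    rw [← pt_eq (hA i l)]
    funext q
    rw [E5 i l q, ps_eq (hΓ l) i, ps_eq (hΓ i) l, ps_eq hφ l,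
        ps_eq (dd_contDiff hφ (ee l)) i, ps_eq hα l, ps_eq (dd_contDiff hα (ee l)) i]
  have hsummand : ∀ l, dd et (dd (ee l) (A i l)) p
      = -(1/2) * (∑ m, dd (ee m) (dd (ee m) (dd (ee l) (γ i l))) p)
        + (1/2) * (dd (ee i) (dd (ee l) (Γ l)) p + dd (ee l) (dd (ee l) (Γ i)) p)
        - 2 * dd (ee i) (dd (ee l) (dd (ee l) φ)) p
        - 2 * kron i l * (∑ m, dd (ee l) (dd (ee m) (dd (ee m) φ)) p)
        - dd (ee i) (dd (ee l) (dd (ee l) α)) p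
        + (1/3) * kron i l * (∑ m, dd (ee l) (dd (ee m) (dd (ee m) α)) p) := by
    intro l
    rw [dd_comm (hA i l) et (ee l) p, hAfun l,
        ddR (ee l) p (-(1/2)) (1/2) 2 (2 * kron i l) ((1/3) * kron i l)
          (lap (γ i l)) (dd (ee i) (Γ l)) (dd (ee l) (Γ i)) (dd (ee i) (dd (ee l) φ))
          (lap φ) (dd (ee i) (dd (ee l) α)) (lap α)
          (lap_contDiff (hγ i l)) (dd_contDiff (hΓ l) _) (dd_contDiff (hΓ i) _)
          (dd_contDiff (dd_contDiff hφ _) _) (lap_contDiff hφ)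
          (dd_contDiff (dd_contDiff hα _) _) (lap_contDiff hα),
        dd_lap (hγ i l) (ee l) p, dd_lap hφ (ee l) p, dd_lap hα (ee l) p,
        dd_comm (hΓ l) (ee l) (ee i) p,
        dd_comm (dd_contDiff hφ (ee l)) (ee l) (ee i) p,
        dd_comm (dd_contDiff hα (ee l)) (ee l) (ee i) p,
        Finset.sum_congr rfl (fun m _ => by
          rw [dd_comm (dd_contDiff (hγ i l) (ee m)) (ee l) (ee m) p,
              dd_comm_fun (hγ i l) (ee l) (ee m)])]
  have hκfun : dd et κ = fun q => -(lap α q) := by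
    rw [← pt_eq hκ]; funext q; exact E3 q
  have hκpart : dd et (dd (ee i) κ) p
      = -(∑ m, dd (ee i) (dd (ee m) (dd (ee m) α)) p) := by
    rw [dd_comm hκ et (ee i) p, hκfun, dd_neg_p (ee i) p, dd_lap hα (ee i) p]
  have hMdd : M i = fun q => (∑ l, dd (ee l) (A i l) q) - 2/3 * dd (ee i) κ q := by
    rw [hM i]; funext q
    rw [ps_eq hκ i]
    congr 1
    exact Finset.sum_congr rfl fun l _ => by rw [ps_eq (hA i l) l]
  have hGsum : ContDiff ℝ (⊤:ℕ∞) (fun q => ∑ l : Fin 3, dd (ee l) (A i l) q) :=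
    ContDiff.sum fun l _ => dd_contDiff (hA i l) _
  have hMc : ContDiff ℝ (⊤:ℕ∞) (M i) := by
    rw [hMdd]; exact hGsum.sub (contDiff_const.mul (dd_contDiff hκ _))
  have hG1 : (fun q => ∑ m, ps m (γ i m) q) = fun q => ∑ m : Fin 3, dd (ee m) (γ i m) q :=
    funext fun q => Finset.sum_congr rfl fun m _ => by rw [ps_eq (hγ i m) m]
  have hG1c : ContDiff ℝ (⊤:ℕ∞) (fun q => ∑ m : Fin 3, dd (ee m) (γ i m) q) :=
    ContDiff.sum fun m _ => dd_contDiff (hγ i m) _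
  have hRγ : lap (fun q => ∑ m, ps m (γ i m) q) p
      = ∑ j, ∑ m, dd (ee j) (dd (ee j) (dd (ee m) (γ i m))) p := by
    rw [hG1, lap_eq hG1c]
    refine Finset.sum_congr rfl fun j _ => ?_
    rw [dd_sum (fun m => dd_contDiff (hγ i m) _) (ee j),
        dd_sum_p (fun m => dd_contDiff (dd_contDiff (hγ i m) _) _) (ee j) p]
  have hΓsumc : ContDiff ℝ (⊤:ℕ∞) (fun q => ∑ l : Fin 3, dd (ee l) (Γ l) q) :=
    ContDiff.sum fun l _ => dd_contDiff (hΓ l) _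
  have hRΓ1 : ps i (fun q => ∑ l, ps l (Γ l) q) p = ∑ l, dd (ee i) (dd (ee l) (Γ l)) p := by
    rw [show (fun q => ∑ l, ps l (Γ l) q) = fun q => ∑ l : Fin 3, dd (ee l) (Γ l) q from
          funext fun q => Finset.sum_congr rfl fun l _ => by rw [ps_eq (hΓ l) l],
        ps_eq hΓsumc i, dd_sum_p (fun l => dd_contDiff (hΓ l) _) (ee i) p]
  have hRΓ2 : lap (Γ i) p = ∑ j, dd (ee j) (dd (ee j) (Γ i)) p := by rw [lap_eq (hΓ i)]
  have hRφ : ps i (lap φ) p = ∑ m, dd (ee i) (dd (ee m) (dd (ee m) φ)) p := by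
    rw [ps_eq (lap_contDiff hφ) i, dd_lap hφ (ee i) p]
  rw [pt_eq hMc, hMdd, ddM et p (2/3) hGsum (dd_contDiff hκ (ee i)),
      dd_sum_p (fun l => dd_contDiff (hA i l) _) et p,
      Finset.sum_congr rfl (fun l _ => hsummand l),
      hκpart, hRγ, hRΓ1, hRΓ2, hRφ]
  exact final_alg i (fun l m => dd (ee m) (dd (ee m) (dd (ee l) (γ i l))) p)
    (fun l => dd (ee i) (dd (ee l) (Γ l)) p) (fun l => dd (ee l) (dd (ee l) (Γ i)) p)
    (fun l => dd (ee i) (dd (ee l) (dd (ee l) φ)) p)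
    (fun l => ∑ m, dd (ee l) (dd (ee m) (dd (ee m) φ)) p)
    (fun l => dd (ee i) (dd (ee l) (dd (ee l) α)) p)
    (fun l => ∑ m, dd (ee l) (dd (ee m) (dd (ee m) α)) p) rfl rfl
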